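/- Assume (V0′), (F0), (F1) and (WN). Then for every u ∈ N⁰: Φ(u) ≥ Φ(tu + w) + ½‖w‖₀² − ½∫_{ℝᴺ} V₁(x)w² dx for all t ≥ 0 and all w ∈ E^{ℱ−}. -/

import Mathlib

open MeasureTheory intervalIntegral

lemma ii_nonpos {f : ℝ → ℝ} {a b : ℝ} (hab : a ≤ b)
    (hf : ∀ u ∈ Set.Icc a b, f u ≤ 0) : (∫ u in a..b, f u) ≤ 0 := by
  have h := intervalIntegral.integral_nonneg (μ := volume) (f := fun u => -f u) hab
    (fun u hu => neg_nonneg.2 (hf u hu))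
  rw [intervalIntegral.integral_neg] at h
  linarith

lemma key_pointwise (g : ℝ → ℝ) (hg : Continuous g)
    (hmono : ∀ s₁ s₂ : ℝ, s₁ ≤ s₂ → (s₂ < 0 ∨ 0 < s₁) → g s₁ / |s₁| ≤ g s₂ / |s₂|)
    (hsmall : ∀ ε : ℝ, 0 < ε → ∃ δ, 0 < δ ∧ ∀ τ : ℝ, |τ| ≤ δ → |g τ| ≤ ε * |τ|) :
    ∀ (t s σ : ℝ), 0 ≤ t →
    (t^2-1)/2 * (g s * s) + t * (g s * σ) + (∫ τ in (0:ℝ)..s, g τ)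
      - (∫ τ in (0:ℝ)..(t*s+σ), g τ) ≤ 0 := by
  have hg0 : g 0 = 0 := by
    obtain ⟨δ, hδ, h⟩ := hsmall 1 one_pos
    have h2 : |g 0| ≤ 0 := by simpa using h 0 (by simpa using hδ.le)
    exact abs_nonpos_iff.mp h2
  have hpos : ∀ τ : ℝ, 0 < τ → 0 ≤ g τ := by
    intro τ hτ
    by_contra hcon
    push_neg at hcon
    have hε : 0 < -g τ / (2*τ) := div_pos (by linarith) (by linarith)
    obtain ⟨δ, hδ, h⟩ := hsmall _ hε
    obtain ⟨τ', hτ'⟩ : ∃ v, v = min τ δ := ⟨_, rfl⟩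
    have hτ'0 : 0 < τ' := hτ' ▸ lt_min hτ hδ
    have h1 : |g τ'| ≤ (-g τ/(2*τ)) * |τ'| := h τ' (by rw [abs_of_pos hτ'0, hτ']; exact min_le_right _ _)
    have h2 : g τ' / |τ'| ≤ g τ / |τ| := hmono τ' τ (hτ' ▸ min_le_left _ _) (Or.inr hτ'0)
    rw [abs_of_pos hτ'0] at h1 h2
    rw [abs_of_pos hτ] at h2
    have h3 : -((-g τ/(2*τ)) * τ') ≤ g τ' := neg_le_of_abs_le h1
    have h4 : -(-g τ/(2*τ)) ≤ g τ' / τ' := by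
      rw [le_div_iff₀ hτ'0]; linarith
    have h5 : -(-g τ/(2*τ)) ≤ g τ / τ := h4.trans h2
    rw [le_div_iff₀ hτ] at h5
    have hq : -(-g τ / (2*τ)) * τ = g τ / 2 := by field_simp
    rw [hq] at h5
    linarith
  have hneg : ∀ τ : ℝ, τ < 0 → g τ ≤ 0 := by
    intro τ hτ
    by_contra hcon
    push_neg at hcon
    have hτ' : (0:ℝ) < -τ := by linarith
    have hε : 0 < g τ / (2*(-τ)) := by positivity
    obtain ⟨δ, hδ, h⟩ := hsmall _ hε
    obtain ⟨τ₁, hτ₁⟩ : ∃ v, v = max τ (-δ) := ⟨_, rfl⟩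
    have hτ₁0 : τ₁ < 0 := hτ₁ ▸ max_lt hτ (by linarith)
    have h1 : |g τ₁| ≤ (g τ/(2*(-τ))) * |τ₁| := by
      refine h τ₁ ?_
      rw [abs_of_neg hτ₁0]
      have := le_max_right τ (-δ)
      rw [hτ₁]
      linarith
    have h2 : g τ / |τ| ≤ g τ₁ / |τ₁| := hmono τ τ₁ (hτ₁ ▸ le_max_left _ _) (Or.inl hτ₁0)
    rw [abs_of_neg hτ₁0] at h1 h2
    rw [abs_of_neg hτ] at h2
    have h3 : g τ₁ ≤ (g τ/(2*(-τ))) * (-τ₁) := le_of_abs_le h1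
    have h4 : g τ₁ / (-τ₁) ≤ g τ/(2*(-τ)) := by
      rw [div_le_iff₀ (by linarith : (0:ℝ) < -τ₁)]; linarith
    have h5 : g τ / (-τ) ≤ g τ/(2*(-τ)) := h2.trans h4
    rw [div_le_div_iff₀ hτ' (by linarith : (0:ℝ) < 2*(-τ))] at h5
    nlinarith [mul_pos hcon hτ']
  have hFnn : ∀ r : ℝ, 0 ≤ ∫ τ in (0:ℝ)..r, g τ := by
    intro r
    rcases le_or_gt 0 r with h|h
    · apply intervalIntegral.integral_nonneg h
      intro τ hτ
      rcases eq_or_lt_of_le hτ.1 with he|hlt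
      · rw [← he, hg0]
      · exact hpos τ hlt
    · rw [intervalIntegral.integral_symm]
      have h2 : (∫ τ in r..(0:ℝ), g τ) ≤ 0 := by
        apply ii_nonpos h.le
        intro τ hτ
        rcases eq_or_lt_of_le hτ.2 with he|hlt
        · rw [he, hg0]
        · exact hneg τ hlt
      linarith
  intro t s σ ht
  rcases eq_or_ne s 0 with rfl|hs
  · have h0 := hFnn (t*0+σ)
    simp only [hg0, mul_zero, zero_mul, mul_zero, add_zero, zero_add,
      intervalIntegral.integral_same] at *
    linarith
  obtain ⟨r, hr⟩ : ∃ r', r' = t*s+σ := ⟨_, rfl⟩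
  rw [← hr]
  obtain ⟨h, hh⟩ : ∃ h', h' = g s / s := ⟨_, rfl⟩
  have hgs : g s = h * s := by rw [hh]; field_simp
  have hh0 : 0 ≤ h := by
    rw [hh]
    rcases hs.lt_or_gt with h'|h'
    · have h1 : g s / s = (-g s) / (-s) := by ring
      rw [h1]
      exact div_nonneg (by linarith [hneg s h']) (by linarith)
    · exact div_nonneg (hpos s h') h'.le
  have hgint : ∀ a b : ℝ, IntervalIntegrable g volume a b := fun a b => hg.intervalIntegrable a b
  have hlinc : Continuous fun τ : ℝ => h*τ := by fun_prop
  have hlc : Continuous fun τ : ℝ => g τ - h*τ := hg.sub hlinc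
  have hφint : ∀ a b : ℝ, IntervalIntegrable (fun τ => g τ - h*τ) volume a b :=
    fun a b => hlc.intervalIntegrable a b
  have hdiff : (∫ τ in (0:ℝ)..r, g τ) - (∫ τ in (0:ℝ)..s, g τ) = ∫ τ in s..r, g τ :=
    intervalIntegral.integral_interval_sub_left (hgint 0 r) (hgint 0 s)
  have hsplit : ∀ a b : ℝ, (∫ τ in a..b, (g τ - h*τ)) = (∫ τ in a..b, g τ) - h*(b^2-a^2)/2 := by
    intro a b
    rw [intervalIntegral.integral_sub (hgint a b) (hlinc.intervalIntegrable a b),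
      intervalIntegral.integral_const_mul, integral_id]
    ring
  have key : -(h*σ^2)/2 ≤ ∫ τ in s..r, (g τ - h*τ) := by
    have hσnn : 0 ≤ h * σ^2 := mul_nonneg hh0 (sq_nonneg σ)
    rcases hs.lt_or_gt with hsneg|hspos
    · -- s < 0
      have cmp_in : ∀ τ, s ≤ τ → τ ≤ 0 → h*τ ≤ g τ := by
        intro τ h1 h2
        rcases eq_or_lt_of_le h2 with he|hlt
        · rw [he, hg0, mul_zero]
        · have hm := hmono s τ h1 (Or.inl hlt)
          rw [abs_of_neg hsneg, abs_of_neg hlt,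
            div_le_div_iff₀ (by linarith) (by linarith)] at hm
          rw [hh, div_mul_eq_mul_div, div_le_iff_of_neg hsneg]
          nlinarith [hm]
      have cmp_out : ∀ τ, τ ≤ s → g τ ≤ h*τ := by
        intro τ h1
        have hτneg : τ < 0 := lt_of_le_of_lt h1 hsneg
        have hm := hmono τ s h1 (Or.inl hsneg)
        rw [abs_of_neg hsneg, abs_of_neg hτneg,
          div_le_div_iff₀ (by linarith) (by linarith)] at hm
        rw [hh, div_mul_eq_mul_div, le_div_iff_of_neg hsneg]
        nlinarith [hm]
      rcases le_or_gt r s with hrs|hsr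
      · rw [intervalIntegral.integral_symm]
        have h2 : (∫ τ in r..s, (g τ - h*τ)) ≤ 0 :=
          ii_nonpos hrs (fun τ hτ => by have := cmp_out τ hτ.2; linarith)
        linarith
      · rcases le_or_gt r 0 with hr0|hr0
        · have h2 : 0 ≤ ∫ τ in s..r, (g τ - h*τ) :=
            intervalIntegral.integral_nonneg hsr.le
              (fun τ hτ => by have := cmp_in τ hτ.1 (hτ.2.trans hr0); linarith)
          linarith
        · have hadj : (∫ τ in s..(0:ℝ), (g τ - h*τ)) + (∫ τ in (0:ℝ)..r, (g τ - h*τ))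
              = ∫ τ in s..r, (g τ - h*τ) :=
            intervalIntegral.integral_add_adjacent_intervals (hφint s 0) (hφint 0 r)
          have h1 : 0 ≤ ∫ τ in s..(0:ℝ), (g τ - h*τ) :=
            intervalIntegral.integral_nonneg hsneg.le
              (fun τ hτ => by have := cmp_in τ hτ.1 hτ.2; linarith)
          have h2 := hsplit 0 r
          have h3 := hFnn r
          have hrσ : r ≤ σ := by
            have hts : t*s ≤ 0 := mul_nonpos_of_nonneg_of_nonpos ht hsneg.le
            rw [hr]; linarith
          have hr2 : r^2 ≤ σ^2 := by nlinarith
          have h5 : h * r^2 ≤ h * σ^2 := mul_le_mul_of_nonneg_left hr2 hh0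
          have h4 : -(h*σ^2)/2 ≤ (∫ τ in (0:ℝ)..r, (g τ - h*τ)) := by
            rw [h2]
            linarith
          linarith
    · -- 0 < s
      have cmp_in : ∀ τ, 0 ≤ τ → τ ≤ s → g τ ≤ h*τ := by
        intro τ h2 h1
        rcases eq_or_lt_of_le h2 with he|hlt
        · rw [← he, hg0, mul_zero]
        · have hm := hmono τ s h1 (Or.inr hlt)
          rw [abs_of_pos hspos, abs_of_pos hlt, div_le_div_iff₀ hlt hspos] at hm
          rw [hh, div_mul_eq_mul_div, le_div_iff₀ hspos]
          nlinarith [hm]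
      have cmp_out : ∀ τ, s ≤ τ → h*τ ≤ g τ := by
        intro τ h1
        have hτpos : 0 < τ := lt_of_lt_of_le hspos h1
        have hm := hmono s τ h1 (Or.inr hspos)
        rw [abs_of_pos hspos, abs_of_pos hτpos, div_le_div_iff₀ hspos hτpos] at hm
        rw [hh, div_mul_eq_mul_div, div_le_iff₀ hspos]
        nlinarith [hm]
      rcases le_or_gt s r with hsr|hrs
      · have h2 : 0 ≤ ∫ τ in s..r, (g τ - h*τ) :=
          intervalIntegral.integral_nonneg hsr
            (fun τ hτ => by have := cmp_out τ hτ.1; linarith)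
        linarith
      · rcases le_or_gt 0 r with hr0|hr0
        · rw [intervalIntegral.integral_symm]
          have h2 : (∫ τ in r..s, (g τ - h*τ)) ≤ 0 :=
            ii_nonpos hrs.le (fun τ hτ => by have := cmp_in τ (hr0.trans hτ.1) hτ.2; linarith)
          linarith
        · have hadj : (∫ τ in s..(0:ℝ), (g τ - h*τ)) + (∫ τ in (0:ℝ)..r, (g τ - h*τ))
              = ∫ τ in s..r, (g τ - h*τ) :=
            intervalIntegral.integral_add_adjacent_intervals (hφint s 0) (hφint 0 r)
          have h1 : 0 ≤ ∫ τ in s..(0:ℝ), (g τ - h*τ) := by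
            rw [intervalIntegral.integral_symm]
            have h2 : (∫ τ in (0:ℝ)..s, (g τ - h*τ)) ≤ 0 :=
              ii_nonpos hspos.le (fun τ hτ => by have := cmp_in τ hτ.1 hτ.2; linarith)
            linarith
          have h2 := hsplit 0 r
          have h3 := hFnn r
          have hrσ : σ ≤ r := by
            have hts : 0 ≤ t*s := mul_nonneg ht hspos.le
            rw [hr]; linarith
          have hr2 : r^2 ≤ σ^2 := by nlinarith
          have h5 : h * r^2 ≤ h * σ^2 := mul_le_mul_of_nonneg_left hr2 hh0
          have h4 : -(h*σ^2)/2 ≤ (∫ τ in (0:ℝ)..r, (g τ - h*τ)) := by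
            rw [h2]
            linarith
          linarith
  have hIlin := hsplit s r
  have halg : (t^2-1)/2*(g s*s) + t*(g s*σ) = h*(r^2-s^2)/2 - (h*σ^2)/2 := by
    rw [hgs, hr]; ring
  linarith [key, hdiff, hIlin, halg]

open MeasureTheory Filter Topology RealInnerProductSpace

/-- `Fint f x t = F(x,t) = ∫₀ᵗ f(x,s) ds`. -/
noncomputable def Fint {N : ℕ} (f : EuclideanSpace ℝ (Fin N) → ℝ → ℝ)
    (x : EuclideanSpace ℝ (Fin N)) (t : ℝ) : ℝ :=
  ∫ s in (0:ℝ)..t, f x s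

theorem energy_inequality_on_NehariPankov
    {E : Type*} [NormedAddCommGroup E] [InnerProductSpace ℝ E] [CompleteSpace E]
    {N : ℕ} (hN : 3 ≤ N)
    -- `E = H¹(ℝᴺ)`, realized as a Hilbert space of functions on `ℝᴺ` via `ι`,
    -- with (weak) gradient `grad`
    (ι : E →ₗ[ℝ] (EuclideanSpace ℝ (Fin N) → ℝ)) (hι : Function.Injective ι)
    (grad : E →ₗ[ℝ] (EuclideanSpace ℝ (Fin N) → EuclideanSpace ℝ (Fin N)))
    (hmem2 : ∀ u : E, MemLp (ι u) 2 (volume : Measure (EuclideanSpace ℝ (Fin N))))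
    (hmemg : ∀ u : E, MemLp (fun x => ‖grad u x‖) 2 (volume : Measure (EuclideanSpace ℝ (Fin N))))
    -- the spectral decomposition of `E` into the negative and positive spectral
    -- subspaces of the Schrödinger operator, with the associated projections
    (Em Ep : Submodule ℝ E) (hEmc : IsClosed (Em : Set E)) (hEpc : IsClosed (Ep : Set E))
    (Pm Pp : E →L[ℝ] E)
    (hPm : ∀ u, Pm u ∈ Em) (hPp : ∀ u, Pp u ∈ Ep) (hPsum : ∀ u, Pm u + Pp u = u)
    (hPmId : ∀ u ∈ Em, Pm u = u) (hPpId : ∀ u ∈ Ep, Pp u = u)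
    (horth : ∀ v ∈ Em, ∀ w ∈ Ep, ⟪v, w⟫ = 0)
    -- (V0'): `V = V₀ + V₁`, `V₀` continuous and bounded, `V₁` continuous vanishing
    -- at infinity; the norm `‖·‖₀` of `E` is the form norm of `A₀ = -Δ + V₀`, whose
    -- quadratic form is positive on `Ep = E^{ℱ+}` and negative on `Em = E^{ℱ-}`
    (V₀ V₁ : EuclideanSpace ℝ (Fin N) → ℝ)
    (hV₀c : Continuous V₀) (hV₀b : ∃ M, ∀ x, |V₀ x| ≤ M) (hV₁c : Continuous V₁)
    (hV₁0 : Tendsto V₁ (cocompact (EuclideanSpace ℝ (Fin N))) (𝓝 0))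
    (hform : ∀ u : E,
      (∫ x, (‖grad u x‖ ^ 2 + V₀ x * (ι u x) ^ 2)) = ‖Pp u‖ ^ 2 - ‖Pm u‖ ^ 2)
    -- (F0) and (F1)
    (f : EuclideanSpace ℝ (Fin N) → ℝ → ℝ)
    (hfc : Continuous (Function.uncurry f))
    (p : ℝ) (hp1 : 2 < p) (hp2 : p < 2 * (N:ℝ) / ((N:ℝ) - 2))
    (hF0 : ∃ C₀ > 0, ∀ x t, |f x t| ≤ C₀ * (1 + |t| ^ (p - 1)))
    (hF1 : ∀ ε > 0, ∃ δ > 0, ∀ x t, |t| ≤ δ → |f x t| ≤ ε * |t|)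
    -- (WN): `t ↦ f(x,t)/|t|` is nondecreasing on `(-∞,0)` and on `(0,∞)`
    (hWN : ∀ (x : EuclideanSpace ℝ (Fin N)) (s₁ s₂ : ℝ),
      s₁ ≤ s₂ → (s₂ < 0 ∨ 0 < s₁) → f x s₁ / |s₁| ≤ f x s₂ / |s₂|)
    -- the energy functional `Φ` and its derivative `Φ'`
    (Φ : E → ℝ) (Φ' : E → E →L[ℝ] ℝ)
    (hΦ : ∀ u, Φ u = (1/2) * (∫ x, (‖grad u x‖ ^ 2 + (V₀ x + V₁ x) * (ι u x) ^ 2))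
        - ∫ x, Fint f x (ι u x))
    (hΦ'd : ∀ u, HasFDerivAt Φ (Φ' u) u)
    (hΦ'eq : ∀ u v, Φ' u v =
      (∫ x, (⟪grad u x, grad v x⟫ + (V₀ x + V₁ x) * (ι u x * ι v x)))
        - ∫ x, f x (ι u x) * ι v x)
    (hintF : ∀ u : E, Integrable (fun x => Fint f x (ι u x)))
    (hintV : ∀ u : E, Integrable (fun x => (V₀ x + V₁ x) * (ι u x) ^ 2))
    (hintf : ∀ u v : E, Integrable (fun x => f x (ι u x) * ι v x))
    (hintV₁ : ∀ u : E, Integrable (fun x => V₁ x * (ι u x) ^ 2))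
 :
    ∀ u ∈ {u : E | u ∉ Em ∧ Φ' u u = 0 ∧ ∀ v ∈ Em, Φ' u v = 0},
      ∀ (t : ℝ) (w : E), 0 ≤ t → w ∈ Em →
        Φ (t • u + w) + (1/2) * ‖w‖ ^ 2 - (1/2) * (∫ x, V₁ x * (ι w x) ^ 2) ≤ Φ u := by
  intro u hu t w ht hw
  obtain ⟨-, huu, huEm⟩ := hu
  -- pointwise norm form vs inner form
  have hnorm : ∀ z : E, (fun x => ‖grad z x‖ ^ 2 + (V₀ x + V₁ x) * (ι z x) ^ 2)
      = fun x => ⟪grad z x, grad z x⟫ + (V₀ x + V₁ x) * (ι z x * ι z x) := by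
    intro z; funext x; rw [real_inner_self_eq_norm_sq]; ring
  -- integrability of the quadratic-form integrands
  have hQzz : ∀ z : E, Integrable
      (fun x => ⟪grad z x, grad z x⟫ + (V₀ x + V₁ x) * (ι z x * ι z x)) := by
    intro z
    exact (hnorm z) ▸ ((hmemg z).integrable_sq.add (hintV z))
  have hQab : ∀ a b : E, Integrable
      (fun x => ⟪grad a x, grad b x⟫ + (V₀ x + V₁ x) * (ι a x * ι b x)) := by
    intro a b
    have hid : (fun x => ⟪grad a x, grad b x⟫ + (V₀ x + V₁ x) * (ι a x * ι b x))
        = fun x => ((⟪grad (a+b) x, grad (a+b) x⟫ + (V₀ x + V₁ x) * (ι (a+b) x * ι (a+b) x))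
          - (⟪grad (a-b) x, grad (a-b) x⟫ + (V₀ x + V₁ x) * (ι (a-b) x * ι (a-b) x))) / 4 := by
      funext x
      simp only [map_add, map_sub, Pi.add_apply, Pi.sub_apply]
      rw [real_inner_add_add_self, real_inner_sub_sub_self]
      ring
    rw [hid]
    exact ((hQzz (a+b)).sub (hQzz (a-b))).div_const 4
  -- quadratic expansion
  have hexp : (fun x => ⟪grad (t•u+w) x, grad (t•u+w) x⟫
        + (V₀ x + V₁ x) * (ι (t•u+w) x * ι (t•u+w) x))
      = fun x => t^2 * (⟪grad u x, grad u x⟫ + (V₀ x + V₁ x) * (ι u x * ι u x))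
        + 2*t*(⟪grad u x, grad w x⟫ + (V₀ x + V₁ x) * (ι u x * ι w x))
        + (⟪grad w x, grad w x⟫ + (V₀ x + V₁ x) * (ι w x * ι w x)) := by
    funext x
    simp only [map_add, _root_.map_smul, Pi.add_apply, Pi.smul_apply, smul_eq_mul]
    rw [real_inner_add_add_self]
    simp only [real_inner_smul_left, real_inner_smul_right]
    ring
  have hTint : (∫ x, (⟪grad (t•u+w) x, grad (t•u+w) x⟫
        + (V₀ x + V₁ x) * (ι (t•u+w) x * ι (t•u+w) x)))
      = t^2 * (∫ x, (⟪grad u x, grad u x⟫ + (V₀ x + V₁ x) * (ι u x * ι u x)))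
        + 2*t*(∫ x, (⟪grad u x, grad w x⟫ + (V₀ x + V₁ x) * (ι u x * ι w x)))
        + (∫ x, (⟪grad w x, grad w x⟫ + (V₀ x + V₁ x) * (ι w x * ι w x))) := by
    have hint1 : Integrable (fun x => t^2 * (⟪grad u x, grad u x⟫
        + (V₀ x + V₁ x) * (ι u x * ι u x))) volume := (hQzz u).const_mul (t^2)
    have hint2 : Integrable (fun x => 2*t*(⟪grad u x, grad w x⟫
        + (V₀ x + V₁ x) * (ι u x * ι w x))) volume := (hQab u w).const_mul (2*t)
    have hint12 : Integrable (fun x => t^2 * (⟪grad u x, grad u x⟫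
        + (V₀ x + V₁ x) * (ι u x * ι u x)) + 2*t*(⟪grad u x, grad w x⟫
        + (V₀ x + V₁ x) * (ι u x * ι w x))) volume := hint1.add hint2
    rw [hexp]
    rw [MeasureTheory.integral_add hint12 (hQzz w),
      MeasureTheory.integral_add hint1 hint2,
      MeasureTheory.integral_const_mul, MeasureTheory.integral_const_mul]
  -- Nehari conditions
  have hQuuA : (∫ x, (⟪grad u x, grad u x⟫ + (V₀ x + V₁ x) * (ι u x * ι u x)))
      = ∫ x, f x (ι u x) * ι u x := by
    have h := hΦ'eq u u
    rw [huu] at h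
    linarith
  have hQuwB : (∫ x, (⟪grad u x, grad w x⟫ + (V₀ x + V₁ x) * (ι u x * ι w x)))
      = ∫ x, f x (ι u x) * ι w x := by
    have h := hΦ'eq u w
    rw [huEm w hw] at h
    linarith
  have hQwwC : (∫ x, (⟪grad w x, grad w x⟫ + (V₀ x + V₁ x) * (ι w x * ι w x)))
      = -‖w‖^2 + ∫ x, V₁ x * (ι w x)^2 := by
    have hsq : (fun x => ⟪grad w x, grad w x⟫ + (V₀ x + V₁ x) * (ι w x * ι w x))
        = fun x => (‖grad w x‖^2 + V₀ x * (ι w x)^2) + V₁ x * (ι w x)^2 := by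
      funext x; rw [real_inner_self_eq_norm_sq]; ring
    have hV0int : Integrable (fun x => ‖grad w x‖^2 + V₀ x * (ι w x)^2) := by
      obtain ⟨M, hM⟩ := hV₀b
      exact (hmemg w).integrable_sq.add
        (((hmem2 w).integrable_sq).bdd_mul (c := M) hV₀c.aestronglyMeasurable
          (Filter.Eventually.of_forall fun x => by simpa using hM x))
    rw [hsq, MeasureTheory.integral_add hV0int (hintV₁ w), hform w]
    have h1 : Pm w = w := hPmId w hw
    have h2 : Pp w = 0 := by
      have h3 := hPsum w
      rw [h1] at h3
      exact add_eq_left.mp h3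
    rw [h1, h2]
    simp
  -- rewriting `ι (t•u+w)`
  have hiota : (fun x => Fint f x (ι (t•u+w) x)) = fun x => Fint f x (t * ι u x + ι w x) := by
    funext x
    congr 1
    simp only [map_add, _root_.map_smul, Pi.add_apply, Pi.smul_apply, smul_eq_mul]
  -- the values of Φ
  have hΦt : Φ (t•u+w) = (1/2) * (t^2 * (∫ x, f x (ι u x) * ι u x)
        + 2*t*(∫ x, f x (ι u x) * ι w x) + (-‖w‖^2 + ∫ x, V₁ x * (ι w x)^2))
      - ∫ x, Fint f x (t * ι u x + ι w x) := by
    rw [hΦ (t•u+w), hnorm (t•u+w), hTint, hQuuA, hQuwB, hQwwC, hiota]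
  have hΦu : Φ u = (1/2) * (∫ x, f x (ι u x) * ι u x) - ∫ x, Fint f x (ι u x) := by
    rw [hΦ u, hnorm u, hQuuA]
  -- the key pointwise inequality, integrated
  have hkey : (∫ x, ((t^2-1)/2 * (f x (ι u x) * ι u x) + t * (f x (ι u x) * ι w x)
      + Fint f x (ι u x) - Fint f x (t * ι u x + ι w x))) ≤ 0 := by
    apply MeasureTheory.integral_nonpos
    intro x
    exact key_pointwise (f x) (hfc.comp (Continuous.prodMk_right x)) (hWN x)
      (fun ε hε => by
        obtain ⟨δ, hδ, hb⟩ := hF1 ε hε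
        exact ⟨δ, hδ, fun τ hτ => hb x τ hτ⟩)
      t (ι u x) (ι w x) ht
  have hD'int : Integrable (fun x => Fint f x (t * ι u x + ι w x)) := hiota ▸ hintF (t•u+w)
  have hksplit : (∫ x, ((t^2-1)/2 * (f x (ι u x) * ι u x) + t * (f x (ι u x) * ι w x)
      + Fint f x (ι u x) - Fint f x (t * ι u x + ι w x)))
      = (t^2-1)/2 * (∫ x, f x (ι u x) * ι u x) + t * (∫ x, f x (ι u x) * ι w x)
        + (∫ x, Fint f x (ι u x)) - ∫ x, Fint f x (t * ι u x + ι w x) := by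
    have hj1 : Integrable (fun x => (t^2-1)/2 * (f x (ι u x) * ι u x)) volume :=
      (hintf u u).const_mul ((t^2-1)/2)
    have hj2 : Integrable (fun x => t * (f x (ι u x) * ι w x)) volume :=
      (hintf u w).const_mul t
    have hj12 : Integrable (fun x => (t^2-1)/2 * (f x (ι u x) * ι u x)
        + t * (f x (ι u x) * ι w x)) volume := hj1.add hj2
    have hj123 : Integrable (fun x => (t^2-1)/2 * (f x (ι u x) * ι u x)
        + t * (f x (ι u x) * ι w x) + Fint f x (ι u x)) volume := hj12.add (hintF u)
    rw [MeasureTheory.integral_sub hj123 hD'int,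
      MeasureTheory.integral_add hj12 (hintF u),
      MeasureTheory.integral_add hj1 hj2,
      MeasureTheory.integral_const_mul, MeasureTheory.integral_const_mul]
  rw [hksplit] at hkey
  rw [hΦt, hΦu]
  linarith
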